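/- The maximal length of a rich square-free word over a 1-letter alphabet is 1, over a 2-letter alphabet is 3, and over a 3-letter alphabet is 7; i.e., r(1)=1, r(2)=3, r(3)=7. -/

import Mathlib

/-- A word is a palindrome if it equals its reversal. -/
def Palindromic {α : Type*} (w : List α) : Prop := w.reverse = w

/-- A finite word is rich if it has exactly |w|+1 distinct palindromic factors
(including the empty word). -/
def Rich {α : Type*} (w : List α) : Prop :=
  {p : List α | p <:+: w ∧ Palindromic p}.ncard = w.length + 1

/-- A word is square-free if it has no factor of the form `u ++ u` with `u` nonempty. -/
def SqFree {α : Type*} (w : List α) : Prop :=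
  ∀ u : List α, u ≠ [] → ¬ (u ++ u) <:+: w

/-- `rsf n` : the maximal length of a rich square-free word using exactly `n` distinct
letters (letters drawn from ℕ). -/
noncomputable def rsf (n : ℕ) : ℕ :=
  sSup {L | ∃ w : List ℕ, Rich w ∧ SqFree w ∧ w.toFinset.card = n ∧ w.length = L}

namespace RSFAux

/-- The set of palindromic factors of a word. -/
def palset {α : Type*} (w : List α) : Set (List α) :=
  {p : List α | p <:+: w ∧ Palindromic p}

/-- List of all infixes (factors) of a word (with repetitions). -/
def infixes {α : Type*} (w : List α) : List (List α) := w.tails.flatMap List.inits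

lemma mem_infixes {α : Type*} {p w : List α} : p ∈ infixes w ↔ p <:+: w := by
  simp only [infixes, List.mem_flatMap, List.mem_tails, List.mem_inits,
    List.infix_iff_prefix_suffix]
  tauto

lemma palset_finite {α : Type*} (w : List α) : (palset w).Finite := by
  apply Set.Finite.subset (List.finite_toSet (infixes w))
  intro p hp
  exact mem_infixes.2 hp.1

lemma infix_snoc {α : Type*} {p v : List α} {a : α} (h : p <:+: v ++ [a]) :
    p <:+: v ∨ p <:+ v ++ [a] := by
  rcases h with ⟨s, t, hst⟩
  rcases List.eq_nil_or_concat t with rfl | ⟨t', b, rfl⟩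
  · right
    exact ⟨s, by simpa using hst⟩
  · left
    have h2 : (s ++ p ++ t') ++ [b] = v ++ [a] := by
      simpa [List.concat_eq_append, List.append_assoc] using hst
    have := (List.append_inj' h2 (by simp)).1
    exact ⟨s, t', this⟩

/-- Key step: a palindromic factor of `v ++ [a]` that is not a factor of `v`
must be a suffix of `v ++ [a]`. -/
lemma new_pal_suffix {α : Type*} {p v : List α} {a : α}
    (hp : p ∈ palset (v ++ [a]) \ palset v) : p <:+ v ++ [a] := by
  rcases infix_snoc hp.1.1 with h | h
  · exact absurd ⟨h, hp.1.2⟩ hp.2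
  · exact h

/-- At most one new palindromic factor is created by appending a letter. -/
lemma palset_snoc_subsingleton {α : Type*} (v : List α) (a : α) :
    (palset (v ++ [a]) \ palset v).Subsingleton := by
  have key : ∀ p q, p ∈ palset (v ++ [a]) \ palset v → q ∈ palset (v ++ [a]) \ palset v →
      p.length ≤ q.length → p = q := by
    intro p q hp hq hlen
    by_contra hne
    have hps : p <:+ v ++ [a] := new_pal_suffix hp
    have hqs : q <:+ v ++ [a] := new_pal_suffix hq
    have hpq : p <:+ q := by
      rcases List.suffix_or_suffix_of_suffix hps hqs with h | h
      · exact h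
      · exact absurd (List.IsSuffix.eq_of_length_le h hlen).symm hne
    -- p is a palindromic suffix of the palindrome q, hence also a prefix of q
    have hppre : p <+: q := by
      have := List.reverse_prefix.2 hpq
      rwa [hp.1.2, hq.1.2] at this
    rcases hppre with ⟨u, rfl⟩
    have hune : u ≠ [] := by
      intro h
      simp [h] at hne
    rcases hqs with ⟨r, hr⟩
    -- r ++ (p ++ u) = v ++ [a], u ≠ []
    rcases List.eq_nil_or_concat u with rfl | ⟨u', b, rfl⟩
    · exact hune rfl
    · have h2 : (r ++ p ++ u') ++ [b] = v ++ [a] := by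
        simpa [List.concat_eq_append, List.append_assoc] using hr
      have h3 : r ++ p ++ u' = v := (List.append_inj' h2 (by simp)).1
      have : p <:+: v := ⟨r, u', by simpa [List.append_assoc] using h3⟩
      exact hp.2 ⟨this, hp.1.2⟩
  intro p hp q hq
  rcases le_total p.length q.length with h | h
  · exact key p q hp hq h
  · exact (key q p hq hp h).symm

lemma palset_mono_snoc {α : Type*} (v : List α) (a : α) :
    palset v ⊆ palset (v ++ [a]) := by
  intro p hp
  exact ⟨hp.1.trans (List.prefix_append v [a]).isInfix, hp.2⟩

lemma palset_snoc_card {α : Type*} (v : List α) (a : α) :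
    (palset (v ++ [a])).ncard ≤ (palset v).ncard + 1 := by
  have hsub := palset_mono_snoc v a
  have hss := palset_snoc_subsingleton v a
  have hdiff : (palset (v ++ [a]) \ palset v).ncard ≤ 1 := by
    rcases hss.eq_empty_or_singleton with h | ⟨x, h⟩ <;> simp [h]
  calc (palset (v ++ [a])).ncard
      = (palset v ∪ (palset (v ++ [a]) \ palset v)).ncard := by
        rw [Set.union_diff_cancel hsub]
    _ ≤ (palset v).ncard + (palset (v ++ [a]) \ palset v).ncard := Set.ncard_union_le _ _
    _ ≤ (palset v).ncard + 1 := by omega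

lemma palset_nil {α : Type*} : palset ([] : List α) = {[]} := by
  ext p
  simp [palset, List.infix_nil, Palindromic]
  rintro rfl; rfl

lemma palset_card_le {α : Type*} (v : List α) : (palset v).ncard ≤ v.length + 1 := by
  induction v using List.reverseRecOn with
  | nil => simp [palset_nil]
  | append_singleton v a ih =>
    have := palset_snoc_card v a
    simp only [List.length_append, List.length_singleton]
    omega

lemma rich_snoc {α : Type*} {v : List α} {a : α} (h : Rich (v ++ [a])) : Rich v := by
  have h1 := palset_snoc_card v a
  have h2 := palset_card_le v
  have h3 : (palset (v ++ [a])).ncard = v.length + 2 := by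
    have h' := h
    rw [Rich] at h'
    simpa [palset, List.length_append] using h'
  have : (palset v).ncard = v.length + 1 := by omega
  exact this

lemma rich_take {α : Type*} {w : List α} (hw : Rich w) (n : ℕ) : Rich (w.take n) := by
  induction w using List.reverseRecOn generalizing n with
  | nil => simpa using hw
  | append_singleton v a ih =>
    rcases le_or_gt n v.length with h | h
    · rw [List.take_append_of_le_length h]
      exact ih (rich_snoc hw) n
    · rw [List.take_of_length_le (by simp; omega)]
      exact hw

lemma sqfree_infix {α : Type*} {v w : List α} (h : SqFree w) (hvw : v <:+: w) : SqFree v :=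
  fun u hu hin => h u hu (hin.trans hvw)

/-! ### Boolean (decidable) versions over ℕ -/

def richB (w : List ℕ) : Bool :=
  ((infixes w).filter (fun p => p.reverse == p)).dedup.length == w.length + 1

lemma rich_iff {w : List ℕ} : Rich w ↔ richB w = true := by
  have hset : {p : List ℕ | p <:+: w ∧ Palindromic p}
      = ↑(((infixes w).filter (fun p => p.reverse == p)).toFinset) := by
    ext p
    simp [List.mem_filter, mem_infixes, Palindromic]
  rw [Rich, hset, Set.ncard_coe_finset, List.card_toFinset, richB]
  simp

def sqfB (w : List ℕ) : Bool :=
  (infixes w).all (fun u => u.isEmpty || !(decide ((u ++ u) <:+: w)))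

lemma sqfree_iff {w : List ℕ} : SqFree w ↔ sqfB w = true := by
  constructor
  · intro h
    rw [sqfB, List.all_eq_true]
    intro u _
    by_cases hu0 : u = []
    · simp [hu0]
    · simp [hu0, List.isEmpty_iff, h u hu0]
  · intro h u hu0 hin
    have hu : u <:+: w := (List.prefix_append u u).isInfix.trans hin
    have := (List.all_eq_true.1 h) u (mem_infixes.2 hu)
    simp [List.isEmpty_iff, hu0, hin] at this

/-! ### Enumeration of square-free words over a small alphabet -/

def gen (k : ℕ) : ℕ → List (List ℕ)
  | 0 => [[]]
  | n + 1 => (gen k n).flatMap (fun w => ((List.range k).map (fun a => a :: w)).filter sqfB)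

lemma mem_gen {w : List ℕ} {k n : ℕ} (hlen : w.length = n) (hk : ∀ x ∈ w, x < k)
    (hs : SqFree w) : w ∈ gen k n := by
  induction n generalizing w with
  | zero =>
    have : w = [] := List.eq_nil_of_length_eq_zero hlen
    simp [gen, this]
  | succ n ih =>
    match w with
    | a :: t =>
      have hts : SqFree t := sqfree_infix hs (List.suffix_cons a t).isInfix
      have ht : t ∈ gen k n :=
        ih (by simpa using hlen) (fun x hx => hk x (List.mem_cons_of_mem a hx)) hts
      simp only [gen, List.mem_flatMap, List.mem_filter, List.mem_map, List.mem_range]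
      exact ⟨t, ht, ⟨a, hk a (List.mem_cons_self), rfl⟩, sqfree_iff.1 hs⟩

/-! ### Relabelling -/

lemma map_cancel {f : ℕ → ℕ} {s : Set ℕ} (hf : Set.InjOn f s) :
    ∀ {l₁ l₂ : List ℕ}, (∀ x ∈ l₁, x ∈ s) → (∀ x ∈ l₂, x ∈ s) →
      l₁.map f = l₂.map f → l₁ = l₂ := by
  intro l₁
  induction l₁ with
  | nil => intro l₂ _ _ h; cases l₂ <;> simp_all
  | cons a t ih =>
    intro l₂ h1 h2 h
    cases l₂ with
    | nil => simp at h
    | cons b t' =>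
      simp only [List.map_cons, List.cons.injEq] at h
      have hab : a = b := hf (h1 a (List.mem_cons_self)) (h2 b (List.mem_cons_self)) h.1
      have := ih (fun x hx => h1 x (List.mem_cons_of_mem a hx))
        (fun x hx => h2 x (List.mem_cons_of_mem b hx)) h.2
      simp [hab, this]

lemma infix_map_rev {f : ℕ → ℕ} {w p : List ℕ} (h : p <:+: List.map f w) :
    ∃ q, q <:+: w ∧ p = q.map f := by
  rcases h with ⟨s, t, hst⟩
  have h1 : List.map f w = s ++ (p ++ t) := by rw [← hst]; simp [List.append_assoc]
  rcases List.map_eq_append_iff.1 h1 with ⟨w1, w2, rfl, hw1, hw2⟩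
  rcases List.map_eq_append_iff.1 hw2 with ⟨q, w3, rfl, hq, hw3⟩
  exact ⟨q, ⟨w1, w3, by simp [List.append_assoc]⟩, hq.symm⟩

lemma pal_map_iff {f : ℕ → ℕ} {w q : List ℕ} (hf : Set.InjOn f {x | x ∈ w})
    (hq : q <:+: w) : Palindromic (q.map f) ↔ Palindromic q := by
  have hmem : ∀ x ∈ q, x ∈ ({x | x ∈ w} : Set ℕ) := fun x hx => hq.subset hx
  constructor
  · intro h
    have h1 : (q.reverse).map f = q.map f := by
      rw [List.map_reverse]; exact h
    exact map_cancel hf (fun x hx => hmem x (List.mem_reverse.1 hx)) hmem h1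
  · intro h
    rw [Palindromic, ← List.map_reverse, h]


lemma sqfree_map {f : ℕ → ℕ} {w : List ℕ} (hf : Set.InjOn f {x | x ∈ w})
    (h : SqFree w) : SqFree (w.map f) := by
  intro u hu hin
  obtain ⟨q, hq, he⟩ := infix_map_rev hin
  rcases List.map_eq_append_iff.1 he.symm with ⟨q1, q2, rfl, h1, h2⟩
  have hmem1 : ∀ x ∈ q1, x ∈ ({x | x ∈ w} : Set ℕ) :=
    fun x hx => hq.subset (by simp [hx])
  have hmem2 : ∀ x ∈ q2, x ∈ ({x | x ∈ w} : Set ℕ) :=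
    fun x hx => hq.subset (by simp [hx])
  have heq : q1 = q2 := map_cancel hf hmem1 hmem2 (h1.trans h2.symm)
  have hne : q1 ≠ [] := by
    intro h0
    apply hu
    rw [← h1, h0]; simp
  exact h q1 hne (by rwa [heq] at hq ⊢)

lemma rich_map {f : ℕ → ℕ} {w : List ℕ} (hf : Set.InjOn f {x | x ∈ w})
    (h : Rich w) : Rich (w.map f) := by
  have hset : {p : List ℕ | p <:+: w.map f ∧ Palindromic p}
      = (List.map f) '' {p : List ℕ | p <:+: w ∧ Palindromic p} := by
    ext p
    constructor
    · rintro ⟨hin, hpal⟩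
      obtain ⟨q, hq, rfl⟩ := infix_map_rev hin
      exact ⟨q, ⟨hq, (pal_map_iff hf hq).1 hpal⟩, rfl⟩
    · rintro ⟨q, ⟨hq, hpal⟩, rfl⟩
      exact ⟨hq.map f, (pal_map_iff hf hq).2 hpal⟩
  have hinj : Set.InjOn (List.map f) {p : List ℕ | p <:+: w ∧ Palindromic p} := by
    intro q1 hq1 q2 hq2 he
    exact map_cancel hf (fun x hx => hq1.1.subset hx) (fun x hx => hq2.1.subset hx) he
  rw [Rich, hset, Set.ncard_image_of_injOn hinj, List.length_map]
  exact h

/-! ### The main bounding lemma -/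

lemma bound {k m : ℕ} (hchk : ∀ v ∈ gen k m, richB v = false)
    (w : List ℕ) (hr : Rich w) (hs : SqFree w) (hc : w.toFinset.card ≤ k)
    (hl : m ≤ w.length) : False := by
  classical
  set v := w.take m with hv
  have hvlen : v.length = m := by simp [hv, List.length_take]; omega
  have hvr : Rich v := rich_take hr m
  have hvin : v <:+: w := (List.take_prefix m w).isInfix
  have hvs : SqFree v := sqfree_infix hs hvin
  have hvsub : v.toFinset ⊆ w.toFinset := by
    intro x hx
    rw [List.mem_toFinset] at hx ⊢
    exact hvin.subset hx
  have hvcard : v.toFinset.card ≤ k := le_trans (Finset.card_le_card hvsub) hc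
  set f := fun x => v.dedup.idxOf x with hf
  have hinj : Set.InjOn f {x | x ∈ v} := by
    intro x hx y hy hxy
    have hx' : x ∈ v.dedup := List.mem_dedup.2 hx
    have hy' : y ∈ v.dedup := List.mem_dedup.2 hy
    have h1 := List.idxOf_get (List.idxOf_lt_length_iff.2 hx')
    have h2 := List.idxOf_get (List.idxOf_lt_length_iff.2 hy')
    rw [← h1, ← h2]
    simp only [hf] at hxy
    congr 1
    exact Fin.ext hxy
  have hlt : ∀ x ∈ v.map f, x < k := by
    intro x hx
    rw [List.mem_map] at hx
    obtain ⟨y, hy, rfl⟩ := hx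
    have : f y < v.dedup.length := List.idxOf_lt_length_iff.2 (List.mem_dedup.2 hy)
    rw [← List.card_toFinset] at this
    omega
  have hmem : v.map f ∈ gen k m :=
    mem_gen (by simp [hvlen]) hlt (sqfree_map hinj hvs)
  have h1 := hchk _ hmem
  have h2 := rich_iff.1 (rich_map hinj hvr)
  rw [h1] at h2
  exact Bool.false_ne_true h2

lemma check1 : ∀ v ∈ gen 1 2, richB v = false := by decide
lemma check2 : ∀ v ∈ gen 2 4, richB v = false := by decide
lemma check3 : ∀ v ∈ gen 3 8, richB v = false := by decide

end RSFAux

open RSFAux in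
theorem rsf_small_values : rsf 1 = 1 ∧ rsf 2 = 3 ∧ rsf 3 = 7 := by
  refine ⟨?_, ?_, ?_⟩
  · apply IsGreatest.csSup_eq
    constructor
    · exact ⟨[0], rich_iff.2 (by decide), sqfree_iff.2 (by decide), by decide, rfl⟩
    · rintro L ⟨w, hr, hs, hc, rfl⟩
      by_contra h
      push_neg at h
      exact bound check1 w hr hs (le_of_eq hc) (by omega)
  · apply IsGreatest.csSup_eq
    constructor
    · exact ⟨[0, 1, 0], rich_iff.2 (by decide), sqfree_iff.2 (by decide), by decide, rfl⟩
    · rintro L ⟨w, hr, hs, hc, rfl⟩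
      by_contra h
      push_neg at h
      exact bound check2 w hr hs (le_of_eq hc) (by omega)
  · apply IsGreatest.csSup_eq
    constructor
    · exact ⟨[0, 1, 0, 2, 0, 1, 0], rich_iff.2 (by decide), sqfree_iff.2 (by decide),
        by decide, rfl⟩
    · rintro L ⟨w, hr, hs, hc, rfl⟩
      by_contra h
      push_neg at h
      exact bound check3 w hr hs (le_of_eq hc) (by omega)
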